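/- Fix a real constant b and define f(a) = ∫_{-∞}^{+∞} Φ(a + bx) φ(x) dx. Then f is differentiable at every a ∈ ℝ with derivative f′(a) = (1/(√(2π)√(1+b²))) e^{-a²/(2(1+b²))}. -/

import Mathlib

open MeasureTheory Real

/-- The density of the standard normal distribution. -/
noncomputable def stdGaussianPDF (x : ℝ) : ℝ :=
  (Real.sqrt (2 * Real.pi))⁻¹ * Real.exp (-x ^ 2 / 2)

/-- The cumulative distribution function of the standard normal distribution. -/
noncomputable def stdGaussianCDF (x : ℝ) : ℝ :=
  ∫ t in Set.Iic x, stdGaussianPDF t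

lemma continuous_stdGaussianPDF : Continuous stdGaussianPDF := by
  unfold stdGaussianPDF; continuity

lemma stdGaussianPDF_nonneg (x : ℝ) : 0 ≤ stdGaussianPDF x := by
  unfold stdGaussianPDF; positivity

lemma stdGaussianPDF_le (x : ℝ) : stdGaussianPDF x ≤ (Real.sqrt (2 * Real.pi))⁻¹ := by
  have h1 : Real.exp (-x ^ 2 / 2) ≤ 1 := Real.exp_le_one_iff.mpr (by nlinarith [sq_nonneg x])
  have h2 : (0:ℝ) ≤ (Real.sqrt (2 * Real.pi))⁻¹ := by positivity
  unfold stdGaussianPDF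
  nlinarith

lemma integrable_stdGaussianPDF : Integrable stdGaussianPDF := by
  unfold stdGaussianPDF
  apply Integrable.const_mul
  have h : ∀ x : ℝ, -x ^ 2 / 2 = -((1:ℝ)/2) * x ^ 2 := by intro x; ring
  simp_rw [h]
  exact integrable_exp_neg_mul_sq (by norm_num)

lemma integral_stdGaussianPDF : ∫ x, stdGaussianPDF x = 1 := by
  unfold stdGaussianPDF
  rw [MeasureTheory.integral_const_mul]
  have h : ∀ x : ℝ, -x ^ 2 / 2 = -((1:ℝ)/2) * x ^ 2 := by intro x; ring
  simp_rw [h, integral_gaussian]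
  rw [show Real.pi / ((1:ℝ)/2) = 2 * Real.pi by ring]
  rw [inv_mul_cancel₀ (by positivity)]

lemma stdGaussianCDF_nonneg (x : ℝ) : 0 ≤ stdGaussianCDF x :=
  setIntegral_nonneg measurableSet_Iic fun t _ => stdGaussianPDF_nonneg t

lemma stdGaussianCDF_le_one (x : ℝ) : stdGaussianCDF x ≤ 1 := by
  rw [← integral_stdGaussianPDF]
  exact setIntegral_le_integral integrable_stdGaussianPDF
    (Filter.Eventually.of_forall fun t => stdGaussianPDF_nonneg t)

lemma hasDerivAt_stdGaussianCDF (x : ℝ) :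
    HasDerivAt stdGaussianCDF (stdGaussianPDF x) x := by
  have heq : stdGaussianCDF = fun y =>
      (∫ t in Set.Iic (0:ℝ), stdGaussianPDF t) + ∫ t in (0:ℝ)..y, stdGaussianPDF t := by
    funext y
    rw [← intervalIntegral.integral_Iic_sub_Iic integrable_stdGaussianPDF.integrableOn
      integrable_stdGaussianPDF.integrableOn]
    unfold stdGaussianCDF
    ring
  rw [heq]
  exact (intervalIntegral.integral_hasDerivAt_right
    (integrable_stdGaussianPDF.intervalIntegrable)
    (continuous_stdGaussianPDF.stronglyMeasurableAtFilter _ _)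
    continuous_stdGaussianPDF.continuousAt).const_add _

lemma continuous_stdGaussianCDF : Continuous stdGaussianCDF :=
  continuous_iff_continuousAt.2 fun x => (hasDerivAt_stdGaussianCDF x).continuousAt

lemma integral_pdf_affine (b a : ℝ) :
    ∫ x, stdGaussianPDF (a + b * x) * stdGaussianPDF x
      = (Real.sqrt (2 * Real.pi) * Real.sqrt (1 + b ^ 2))⁻¹
        * Real.exp (-a ^ 2 / (2 * (1 + b ^ 2))) := by
  set s : ℝ := 1 + b ^ 2 with hs
  have hs0 : 0 < s := by positivity
  set m : ℝ := a * b / s with hm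
  have key : ∀ x, stdGaussianPDF (a + b * x) * stdGaussianPDF x
      = ((Real.sqrt (2 * Real.pi))⁻¹ * (Real.sqrt (2 * Real.pi))⁻¹
          * Real.exp (-a ^ 2 / (2 * s)))
        * Real.exp (-(s / 2) * (x + m) ^ 2) := by
    intro x
    have hsne : s ≠ 0 := ne_of_gt hs0
    have hexp : -(a + b * x) ^ 2 / 2 + -x ^ 2 / 2
        = -a ^ 2 / (2 * s) + -(s / 2) * (x + m) ^ 2 := by
      rw [hm, hs]
      field_simp
      ring
    unfold stdGaussianPDF
    rw [mul_mul_mul_comm, ← Real.exp_add, hexp, Real.exp_add]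
    ring
  simp_rw [key]
  rw [MeasureTheory.integral_const_mul]
  have hshift : (∫ x, Real.exp (-(s / 2) * (x + m) ^ 2))
      = ∫ x, Real.exp (-(s / 2) * x ^ 2) :=
    integral_add_right_eq_self (fun y => Real.exp (-(s / 2) * y ^ 2)) m
  rw [hshift, integral_gaussian]
  have hsd : Real.sqrt (Real.pi / (s / 2)) = Real.sqrt (2 * Real.pi) / Real.sqrt s := by
    rw [div_div_eq_mul_div, mul_comm Real.pi 2, Real.sqrt_div (by positivity)]
  rw [hsd]
  have h1 : (0:ℝ) < Real.sqrt (2 * Real.pi) := Real.sqrt_pos.2 (by positivity)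
  have h2 : (0:ℝ) < Real.sqrt s := Real.sqrt_pos.2 hs0
  have h3 : Real.sqrt (2 * Real.pi) * Real.sqrt (2 * Real.pi) = 2 * Real.pi :=
    Real.mul_self_sqrt (by positivity)
  field_simp [h1.ne', h2.ne']

/-- `f(a) = ∫ Φ(a + bx) φ(x) dx` is differentiable with
`f′(a) = (1/(√(2π)√(1+b²))) e^{-a²/(2(1+b²))}`. -/
theorem hasDerivAt_integral_stdGaussianCDF_affine (b : ℝ) (a : ℝ) :
    HasDerivAt (fun a : ℝ => ∫ x, stdGaussianCDF (a + b * x) * stdGaussianPDF x)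
      ((Real.sqrt (2 * Real.pi) * Real.sqrt (1 + b ^ 2))⁻¹
        * Real.exp (-a ^ 2 / (2 * (1 + b ^ 2)))) a := by
  have hmain := hasDerivAt_integral_of_dominated_loc_of_deriv_le (μ := volume) (x₀ := a)
    (F := fun a x => stdGaussianCDF (a + b * x) * stdGaussianPDF x)
    (F' := fun a x => stdGaussianPDF (a + b * x) * stdGaussianPDF x)
    (bound := fun x => (Real.sqrt (2 * Real.pi))⁻¹ * stdGaussianPDF x)
    Filter.univ_mem
    (Filter.Eventually.of_forall fun a' =>
      ((continuous_stdGaussianCDF.comp (by continuity)).mul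
        continuous_stdGaussianPDF).aestronglyMeasurable)
    ?_
    ((continuous_stdGaussianPDF.comp (by continuity)).mul
      continuous_stdGaussianPDF).aestronglyMeasurable
    ?_ (integrable_stdGaussianPDF.const_mul _) ?_
  · have := hmain.2
    rwa [integral_pdf_affine b a] at this
  · -- integrability of F a
    apply Integrable.mono integrable_stdGaussianPDF
      ((continuous_stdGaussianCDF.comp (by continuity)).mul
        continuous_stdGaussianPDF).aestronglyMeasurable
    refine Filter.Eventually.of_forall fun x => ?_
    simp only [Pi.mul_apply, Function.comp_apply]
    rw [Real.norm_eq_abs, Real.norm_eq_abs, abs_mul,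
      abs_of_nonneg (stdGaussianCDF_nonneg _), abs_of_nonneg (stdGaussianPDF_nonneg _)]
    calc stdGaussianCDF (a + b * x) * stdGaussianPDF x
        ≤ 1 * stdGaussianPDF x := by
          exact mul_le_mul_of_nonneg_right (stdGaussianCDF_le_one _) (stdGaussianPDF_nonneg _)
      _ = stdGaussianPDF x := one_mul _
  · -- bound
    refine Filter.Eventually.of_forall fun x a' _ => ?_
    rw [Real.norm_eq_abs, abs_mul, abs_of_nonneg (stdGaussianPDF_nonneg _),
      abs_of_nonneg (stdGaussianPDF_nonneg _)]
    exact mul_le_mul_of_nonneg_right (stdGaussianPDF_le _) (stdGaussianPDF_nonneg _)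
  · -- differentiability
    refine Filter.Eventually.of_forall fun x a' _ => ?_
    have h1 : HasDerivAt (fun a : ℝ => a + b * x) 1 a' := (hasDerivAt_id a').add_const (b * x)
    have h2 : HasDerivAt (fun a : ℝ => stdGaussianCDF (a + b * x))
        (stdGaussianPDF (a' + b * x)) a' := by
      have := (hasDerivAt_stdGaussianCDF (a' + b * x)).comp a' h1
      rw [mul_one] at this
      exact this
    simpa using h2.mul_const (stdGaussianPDF x)
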